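/- arXiv:1910.13545 — 2 statements merged into one kernel-verified Lean document; each statement's English description precedes it below -/
import Mathlib

section
/- Let M = M_{Q_2} over ℤ[z_1,…,z_{2n-1}] for the word Q_2 = (n, n-1, …, 2, 1, 2, …, n-1, n). Then for every 1 ≤ α ≤ n, the determinant of the northwest α×α submatrix of M (rows and columns {1,…,α}) equals -(z_n + Σ_{k=1}^{α-1} z_{n-k} z_{n+k}). (Computational core of Proposition 3 for 1 ≤ α ≤ n.) -/
open Matrix MvPolynomial

/-- For `1 ≤ α ≤ n`, the `(2n+2) × (2n+2)` identity matrix modified by replacing the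
`2 × 2` diagonal block in rows/columns `{α, α+1}` (1-based) by `[[-z,1],[1,0]]` and the
`2 × 2` diagonal block in rows/columns `{2n+2-α, 2n+3-α}` by `[[z,1],[1,0]]`; for
`α = 0`, the identity matrix with the central `4 × 4` diagonal block in rows/columns
`{n, n+1, n+2, n+3}` replaced by `[[-z,0,1,0],[0,z,0,1],[1,0,0,0],[0,1,0,0]]`. -/
def gMat {R : Type*} [CommRing R] (n : ℕ) (α : ℕ) (z : R) :
    Matrix (Fin (2 * n + 2)) (Fin (2 * n + 2)) R :=
  Matrix.of fun i j =>
    let i' := (i : ℕ) + 1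
    let j' := (j : ℕ) + 1
    if α = 0 then
      if i' = n ∧ j' = n then -z
      else if i' = n + 1 ∧ j' = n + 1 then z
      else if (i' = n ∧ j' = n + 2) ∨ (i' = n + 1 ∧ j' = n + 3) ∨
              (i' = n + 2 ∧ j' = n) ∨ (i' = n + 3 ∧ j' = n + 1) then 1
      else if i' = j' ∧ ¬(i' = n ∨ i' = n + 1 ∨ i' = n + 2 ∨ i' = n + 3) then 1
      else 0
    else
      if i' = α ∧ j' = α then -z
      else if i' = 2 * n + 2 - α ∧ j' = 2 * n + 2 - α then z
      else if (i' = α ∧ j' = α + 1) ∨ (i' = α + 1 ∧ j' = α) ∨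
              (i' = 2 * n + 2 - α ∧ j' = 2 * n + 3 - α) ∨
              (i' = 2 * n + 3 - α ∧ j' = 2 * n + 2 - α) then 1
      else if i' = j' ∧
          ¬(i' = α ∨ i' = α + 1 ∨ i' = 2 * n + 2 - α ∨ i' = 2 * n + 3 - α) then 1
      else 0

/-- The descending word `(a, a-1, …, b)`. -/
def descWord (a b : ℕ) : List ℕ := (List.range (a + 1 - b)).reverse.map (· + b)

/-- The ascending word `(a, a+1, …, b)`. -/
def ascWord (a b : ℕ) : List ℕ := (List.range (b + 1 - a)).map (· + a)

/-- `Q_1 = (0, n-1, n-2, …, 2, 1, 2, 3, …, n-1, 0)`. -/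
def wordQ1 (n : ℕ) : List ℕ := 0 :: (descWord (n - 1) 1 ++ ascWord 2 (n - 1) ++ [0])

/-- `Q_2 = (n, n-1, …, 2, 1, 2, …, n-1, n)`. -/
def wordQ2 (n : ℕ) : List ℕ := descWord n 1 ++ ascWord 2 n

/-- `Q^{(i)} = (i, i-1, …, 1, 2, 3, …, n-1, 0, n, n-1, …, i+1)`. -/
def wordQi (n i : ℕ) : List ℕ :=
  descWord i 1 ++ ascWord 2 (n - 1) ++ [0] ++ descWord n (i + 1)

/-- `M_Q = g_{α_1}(z_1) · g_{α_2}(z_2) ⋯ g_{α_L}(z_L)` over `ℤ[z_1, z_2, …]`,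
where `z_j` is the variable `X j`. -/
noncomputable def MQ (n : ℕ) (Q : List ℕ) :
    Matrix (Fin (2 * n + 2)) (Fin (2 * n + 2)) (MvPolynomial ℕ ℤ) :=
  (List.ofFn (fun l : Fin Q.length => gMat n (Q.get l) (X ((l : ℕ) + 1)))).prod

/-- The determinant of the northwest `α × α` submatrix. -/
noncomputable def nwDet {n : ℕ}
    (M : Matrix (Fin (2 * n + 2)) (Fin (2 * n + 2)) (MvPolynomial ℕ ℤ))
    (α : ℕ) (h : α ≤ 2 * n + 2) : MvPolynomial ℕ ℤ :=
  (M.submatrix (Fin.castLE h) (Fin.castLE h)).det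

lemma ascWord_nil (n : ℕ) : ascWord (n + 1) n = [] := by
  simp [ascWord, Nat.sub_eq_zero_of_le]

lemma ascWord_cons (m n : ℕ) (h : m ≤ n) : ascWord m n = m :: ascWord (m + 1) n := by
  have h1 : n + 1 - m = (n - m) + 1 := by omega
  have h2 : n + 1 - (m + 1) = n - m := by omega
  simp only [ascWord, h1, h2, List.range_succ_eq_map, List.map_cons, List.map_map]
  congr 1
  · omega
  · apply List.map_congr_left
    intro a _
    simp [Function.comp, Nat.succ_eq_add_one]
    omega

noncomputable def prodFrom (n : ℕ) : ℕ → List ℕ → Matrix (Fin (2*n+2)) (Fin (2*n+2)) (MvPolynomial ℕ ℤ)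
  | _, [] => 1
  | s, a :: t => gMat n a (X s) * prodFrom n (s+1) t

section rows
variable {R : Type*} [CommRing R] (n m : ℕ) (z : R)

lemma gMat_row_m (hm1 : 1 ≤ m) (hmn : m ≤ n) (i k : Fin (2*n+2))
    (hi : (i:ℕ) + 1 = m) :
    gMat n m z i k = if (k:ℕ) = m - 1 then -z else if (k:ℕ) = m then 1 else 0 := by
  simp only [gMat, of_apply]
  split_ifs <;> first | rfl | omega | (exfalso; omega) | contradiction

lemma gMat_row_m1 (hm1 : 1 ≤ m) (hmn : m ≤ n) (i k : Fin (2*n+2))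
    (hi : (i:ℕ) + 1 = m + 1) :
    gMat n m z i k = if (k:ℕ) = m - 1 then 1 else 0 := by
  simp only [gMat, of_apply]
  split_ifs <;> first | rfl | omega | (exfalso; omega) | contradiction

lemma gMat_row_other (hm1 : 1 ≤ m) (hmn : m ≤ n) (i k : Fin (2*n+2))
    (hi : (i:ℕ) ≤ n) (h1 : (i:ℕ) + 1 ≠ m) (h2 : (i:ℕ) + 1 ≠ m + 1) :
    gMat n m z i k = if (k:ℕ) = (i:ℕ) then 1 else 0 := by
  simp only [gMat, of_apply]
  split_ifs <;> first | rfl | omega | (exfalso; omega) | contradiction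

end rows

section sums
variable {R : Type*} [CommRing R]

lemma sum_if_one {N : ℕ} (f : Fin N → R) (p : ℕ) (hp : p < N) :
    ∑ k : Fin N, (if (k:ℕ) = p then (1:R) else 0) * f k = f ⟨p, hp⟩ := by
  rw [Finset.sum_eq_single (⟨p, hp⟩ : Fin N)]
  · simp
  · intro b _ hb
    rw [if_neg (fun h => hb (Fin.ext h)), zero_mul]
  · simp

lemma sum_if_two {N : ℕ} (f : Fin N → R) (p q : ℕ) (hp : p < N) (hq : q < N)
    (hpq : p ≠ q) (c d : R) :
    ∑ k : Fin N, (if (k:ℕ) = p then c else if (k:ℕ) = q then d else 0) * f k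
      = c * f ⟨p, hp⟩ + d * f ⟨q, hq⟩ := by
  have key : ∀ k : Fin N,
      (if (k:ℕ) = p then c else if (k:ℕ) = q then d else 0) * f k
        = (if k = ⟨p, hp⟩ then c * f ⟨p, hp⟩ else 0)
          + (if k = ⟨q, hq⟩ then d * f ⟨q, hq⟩ else 0) := by
    intro k
    by_cases h1 : (k:ℕ) = p
    · have e1 : k = ⟨p, hp⟩ := Fin.ext h1
      rw [if_pos h1, if_pos e1, if_neg (by intro h; apply hpq; rw [← h1, h]), add_zero, e1]
    · by_cases h2 : (k:ℕ) = q
      · have e2 : k = ⟨q, hq⟩ := Fin.ext h2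
        rw [if_neg h1, if_pos h2, if_neg (fun h => h1 (by rw [h])), if_pos e2, zero_add, e2]
      · rw [if_neg h1, if_neg h2, zero_mul,
          if_neg (fun h => h1 (by rw [h])), if_neg (fun h => h2 (by rw [h])), add_zero]
  rw [Finset.sum_congr rfl (fun k _ => key k), Finset.sum_add_distrib]
  simp
end sums

/-- Top-block entry function of the ascending suffix product. -/
noncomputable def Tf (n m i j : ℕ) : MvPolynomial ℕ ℤ :=
  if i + 1 < m then (if j = i then 1 else 0)
  else if i + 1 = m then (if j < m - 1 then 0 else if j < n then -X (n+j) else 1)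
  else if j + 1 = i then 1 else 0

set_option maxHeartbeats 2000000 in
lemma ascLemma (n : ℕ) : ∀ (k m : ℕ), 2 ≤ m → m + k = n + 1 →
    ∀ (i j : Fin (2*n+2)), (i:ℕ) ≤ n → (j:ℕ) ≤ n →
    prodFrom n (n+m-1) (ascWord m n) i j = Tf n m (i:ℕ) (j:ℕ) := by
  intro k
  induction k with
  | zero =>
    intro m hm2 hmk i j hi hj
    have hm : m = n + 1 := by omega
    subst hm
    rw [ascWord_nil, prodFrom, Matrix.one_apply]
    simp only [Tf, Fin.ext_iff]
    split_ifs <;> first | rfl | omega | (exfalso; omega) | contradiction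
  | succ k IH =>
    intro m hm2 hmk i j hi hj
    have hmn : m ≤ n := by omega
    rw [ascWord_cons m n hmn, prodFrom, Matrix.mul_apply,
      show n + m - 1 + 1 = n + (m+1) - 1 from by omega]
    have hA := fun (i' j' : Fin (2*n+2)) hi' hj' => IH (m+1) (by omega) (by omega) i' j' hi' hj'
    rcases eq_or_ne ((i:ℕ) + 1) m with him | him
    · -- row i = m-1
      rw [Finset.sum_congr rfl (fun k' _ => by
        rw [gMat_row_m n m _ (by omega) hmn i k' him])]
      rw [sum_if_two _ (m-1) m (by omega) (by omega) (by omega)]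
      rw [hA ⟨m-1, by omega⟩ j (by simp; omega) hj, hA ⟨m, by omega⟩ j (by simp; omega) hj]
      simp only [Fin.val_mk]
      rw [show (i:ℕ) = m - 1 from by omega]
      by_cases hjm : (j:ℕ) = m - 1
      · rw [hjm]
        simp only [Tf]
        rw [show n + m - 1 = n + (m-1) from by omega]
        split_ifs <;> first | ring1 | omega | (exfalso; omega) | contradiction
      · simp only [Tf]
        split_ifs <;> first | ring1 | omega | (exfalso; omega) | contradiction
    · rcases eq_or_ne ((i:ℕ) + 1) (m+1) with him1 | him1
      · -- row i = m
        rw [Finset.sum_congr rfl (fun k' _ => by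
          rw [gMat_row_m1 n m _ (by omega) hmn i k' him1])]
        rw [sum_if_one _ (m-1) (by omega)]
        rw [hA ⟨m-1, by omega⟩ j (by simp; omega) hj]
        simp only [Fin.val_mk]
        rw [show (i:ℕ) = m from by omega]
        simp only [Tf]
        split_ifs <;> first | rfl | omega | (exfalso; omega) | contradiction
      · -- other rows
        rw [Finset.sum_congr rfl (fun k' _ => by
          rw [gMat_row_other n m _ (by omega) hmn i k' hi him him1])]
        rw [sum_if_one _ (i:ℕ) (by omega)]
        simp only [Fin.eta]
        rw [hA i j hi hj]
        simp only [Tf]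
        split_ifs <;> first | rfl | omega | (exfalso; omega) | contradiction

lemma descWord_succ (m : ℕ) : descWord (m + 1) 1 = (m + 1) :: descWord m 1 := by
  simp [descWord, List.range_succ]

lemma descWord_one : descWord 1 1 = [1] := by rfl

/-- Top-block entry function of the suffix product starting within the descending part. -/
noncomputable def Sf (n m i j : ℕ) : MvPolynomial ℕ ℤ :=
  if i = 0 then (if j < n then -X (n+j) else 1)
  else if i < m then (if j = 0 then -X (n-i) else if j = i then 1 else 0)
  else if i = m then (if j = 0 then 1 else 0)
  else if j + 1 = i then 1 else 0

set_option maxHeartbeats 2000000 in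
lemma descLemma (n : ℕ) (hn : 2 ≤ n) : ∀ (m : ℕ), 1 ≤ m → m ≤ n →
    ∀ (i j : Fin (2*n+2)), (i:ℕ) ≤ n → (j:ℕ) ≤ n →
    prodFrom n (n+1-m) (descWord m 1 ++ ascWord 2 n) i j = Sf n m (i:ℕ) (j:ℕ) := by
  intro m
  induction m with
  | zero => omega
  | succ m IH =>
    intro _ hmn i j hi hj
    rcases Nat.eq_zero_or_pos m with rfl | hm1
    · -- base case m+1 = 1
      rw [descWord_one, List.cons_append, List.nil_append, prodFrom, Matrix.mul_apply,
        show n + 1 - 1 + 1 = n + 2 - 1 from by omega]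
      have hA := fun (i' j' : Fin (2*n+2)) hi' hj' =>
        ascLemma n (n - 1) 2 (by omega) (by omega) i' j' hi' hj'
      rcases eq_or_ne ((i:ℕ) + 1) 1 with him | him
      · rw [Finset.sum_congr rfl (fun k' _ => by
          rw [gMat_row_m n 1 _ (by omega) (by omega) i k' him])]
        rw [sum_if_two _ 0 1 (by omega) (by omega) (by omega)]
        rw [hA ⟨0, by omega⟩ j (by simp) hj, hA ⟨1, by omega⟩ j (by simp; omega) hj]
        simp only [Fin.val_mk]
        rw [show (i:ℕ) = 0 from by omega, show n + 1 - 1 = n + 0 from by omega]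
        by_cases hj0 : (j:ℕ) = 0
        · rw [hj0]
          simp only [Tf, Sf]
          split_ifs <;> first | ring1 | omega | (exfalso; omega) | contradiction
        · simp only [Tf, Sf]
          split_ifs <;> first | ring1 | omega | (exfalso; omega) | contradiction
      · rcases eq_or_ne ((i:ℕ) + 1) 2 with him1 | him1
        · rw [Finset.sum_congr rfl (fun k' _ => by
            rw [gMat_row_m1 n 1 _ (by omega) (by omega) i k' him1])]
          rw [sum_if_one _ 0 (by omega)]
          rw [hA ⟨0, by omega⟩ j (by simp) hj]
          simp only [Fin.val_mk]
          rw [show (i:ℕ) = 1 from by omega]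
          simp only [Tf, Sf]
          split_ifs <;> first | rfl | omega | (exfalso; omega) | contradiction
        · rw [Finset.sum_congr rfl (fun k' _ => by
            rw [gMat_row_other n 1 _ (by omega) (by omega) i k' hi him him1])]
          rw [sum_if_one _ (i:ℕ) (by omega)]
          simp only [Fin.eta]
          rw [hA i j hi hj]
          simp only [Tf, Sf]
          split_ifs <;> first | rfl | omega | (exfalso; omega) | contradiction
    · -- inductive step: m ≥ 1, word (m+1)
      have hmn' : m + 1 ≤ n := hmn
      rw [descWord_succ, List.cons_append, prodFrom, Matrix.mul_apply,
        show n + 1 - (m + 1) + 1 = n + 1 - m from by omega]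
      have hA := fun (i' j' : Fin (2*n+2)) hi' hj' => IH hm1 (by omega) i' j' hi' hj'
      rcases eq_or_ne ((i:ℕ) + 1) (m+1) with him | him
      · rw [Finset.sum_congr rfl (fun k' _ => by
          rw [gMat_row_m n (m+1) _ (by omega) hmn' i k' him])]
        simp only [Nat.add_sub_cancel]
        rw [sum_if_two _ m (m+1) (by omega) (by omega) (by omega)]
        rw [hA ⟨m, by omega⟩ j (by simp; omega) hj, hA ⟨m+1, by omega⟩ j (by simp; omega) hj]
        simp only [Fin.val_mk]
        rw [show (i:ℕ) = m from by omega,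
          show n + 1 - (m+1) = n - m from by omega]
        simp only [Sf]
        split_ifs <;> first | ring1 | omega | (exfalso; omega) | contradiction
      · rcases eq_or_ne ((i:ℕ) + 1) (m+2) with him1 | him1
        · rw [Finset.sum_congr rfl (fun k' _ => by
            rw [gMat_row_m1 n (m+1) _ (by omega) hmn' i k' him1])]
          simp only [Nat.add_sub_cancel]
          rw [sum_if_one _ m (by omega)]
          rw [hA ⟨m, by omega⟩ j (by simp; omega) hj]
          simp only [Fin.val_mk]
          rw [show (i:ℕ) = m + 1 from by omega]
          simp only [Sf]
          split_ifs <;> first | rfl | omega | (exfalso; omega) | contradiction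
        · rw [Finset.sum_congr rfl (fun k' _ => by
            rw [gMat_row_other n (m+1) _ (by omega) hmn' i k' hi him him1])]
          rw [sum_if_one _ (i:ℕ) (by omega)]
          simp only [Fin.eta]
          rw [hA i j hi hj]
          simp only [Sf]
          split_ifs <;> first | rfl | omega | (exfalso; omega) | contradiction


lemma ofFn_prod_eq (n : ℕ) (Q : List ℕ) : ∀ s : ℕ,
    (List.ofFn (fun l : Fin Q.length => gMat n (Q.get l) (X ((l : ℕ) + s)))).prod
      = prodFrom n s Q := by
  induction Q with
  | nil => intro s; simp [prodFrom]
  | cons a t ih =>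
    intro s
    rw [List.ofFn_succ, List.prod_cons]
    simp only [List.get_cons_succ, Fin.val_succ, Fin.val_zero, List.get,
      Nat.zero_add]
    rw [prodFrom]
    congr 1
    rw [← ih (s+1)]
    apply congrArg List.prod
    apply congrArg List.ofFn
    funext l
    rw [show (l:ℕ) + 1 + s = (l:ℕ) + (s + 1) from by omega]
    rfl

set_option maxHeartbeats 1000000 in
/-- computational core of Proposition 3 for `1 ≤ α ≤ n`: for
`M = M_{Q_2}` and `1 ≤ α ≤ n`, the determinant of the northwest `α × α` submatrix of
`M` equals `-(z_n + Σ_{k=1}^{α-1} z_{n-k} z_{n+k})`. -/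
theorem nwDet_MQ_wordQ2 (n : ℕ) (hn : 2 ≤ n) (α : ℕ) (hα1 : 1 ≤ α) (hαn : α ≤ n) :
    nwDet (MQ n (wordQ2 n)) α (by omega) =
      -(X n + ∑ k ∈ Finset.Icc 1 (α - 1), X (n - k) * X (n + k)) := by
  classical
  set d : MvPolynomial ℕ ℤ := -(X n + ∑ k ∈ Finset.Icc 1 (α - 1), X (n - k) * X (n + k))
    with hd
  have hMQ : ∀ i j : Fin (2*n+2), (i:ℕ) ≤ n → (j:ℕ) ≤ n →
      MQ n (wordQ2 n) i j = Sf n n (i:ℕ) (j:ℕ) := by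
    intro i j hi hj
    have h1 : MQ n (wordQ2 n) = prodFrom n 1 (wordQ2 n) := ofFn_prod_eq n _ 1
    have h2 := descLemma n hn n (by omega) le_rfl i j hi hj
    rw [show n + 1 - n = 1 from by omega] at h2
    rw [h1]
    exact h2
  have hα2 : α ≤ 2*n+2 := by omega
  set U : Matrix (Fin α) (Fin α) (MvPolynomial ℕ ℤ) :=
    Matrix.of (fun i j => if (i:ℕ) = 0 then (if (j:ℕ) = 0 then d else -X (n + (j:ℕ)))
      else if i = j then 1 else 0) with hU
  set L : Matrix (Fin α) (Fin α) (MvPolynomial ℕ ℤ) :=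
    Matrix.of (fun i j => if i = j then 1 else if (j:ℕ) = 0 then -X (n - (i:ℕ)) else 0)
      with hL
  have key : (MQ n (wordQ2 n)).submatrix (Fin.castLE hα2) (Fin.castLE hα2) = U * L := by
    apply Matrix.ext
    intro i j
    have hiα : (i:ℕ) < α := i.isLt
    have hjα : (j:ℕ) < α := j.isLt
    rw [Matrix.submatrix_apply, Matrix.mul_apply,
      hMQ _ _ (by simp only [Fin.coe_castLE]; omega) (by simp only [Fin.coe_castLE]; omega)]
    simp only [Fin.coe_castLE]
    rcases eq_or_ne ((i:ℕ)) 0 with hi0 | hi0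
    · rcases eq_or_ne ((j:ℕ)) 0 with hj0 | hj0
      · -- (0,0) entry
        have hterm : ∀ k : Fin α, U i k * L k j
            = (if (k:ℕ) = 0 then d else X (n - (k:ℕ)) * X (n + (k:ℕ))) := by
          intro k
          simp only [hU, hL, Matrix.of_apply, Fin.ext_iff]
          split_ifs <;> first | ring1 | omega | (exfalso; omega)
        rw [Finset.sum_congr rfl (fun k _ => hterm k)]
        have hrange : ∑ k : Fin α, (if (k:ℕ) = 0 then d else X (n - (k:ℕ)) * X (n + (k:ℕ)))
            = ∑ k ∈ Finset.range α, (if k = 0 then d else X (n - k) * X (n + k)) :=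
          Fin.sum_univ_eq_sum_range (fun k => if k = 0 then d else X (n - k) * X (n + k)) α
        have hins : Finset.range α = insert 0 (Finset.Icc 1 (α - 1)) := by
          ext x
          simp only [Finset.mem_range, Finset.mem_insert, Finset.mem_Icc]
          omega
        rw [hrange, hins, Finset.sum_insert (by simp), if_pos rfl,
          Finset.sum_congr rfl (fun x hx => by
            rw [if_neg (by simp only [Finset.mem_Icc] at hx; omega)])]
        rw [Sf, if_pos hi0, if_pos (by omega), hj0, Nat.add_zero, hd]
        ring
      · -- (0, j), j ≠ 0
        have hterm : ∀ k : Fin α, U i k * L k j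
            = if k = j then -X (n + (j:ℕ)) else 0 := by
          intro k
          rcases eq_or_ne k j with rfl | hkj
          · simp only [hU, hL, Matrix.of_apply, Fin.ext_iff]
            split_ifs <;> first | ring1 | omega | (exfalso; omega)
          · have hkj' : ¬((k:ℕ) = (j:ℕ)) := fun h => hkj (Fin.ext h)
            simp only [hU, hL, Matrix.of_apply, Fin.ext_iff]
            split_ifs <;> first | ring1 | omega | (exfalso; omega)
        rw [Finset.sum_congr rfl (fun k _ => hterm k), Finset.sum_ite_eq' Finset.univ j,
          if_pos (Finset.mem_univ j), Sf, if_pos hi0, if_pos (show (j:ℕ) < n by omega)]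
    · -- i ≠ 0 rows
      have hterm : ∀ k : Fin α, U i k * L k j = if k = i then L k j else 0 := by
        intro k
        simp only [hU, Matrix.of_apply, if_neg hi0]
        rcases eq_or_ne k i with hki | hki
        · subst hki; rw [if_pos rfl, if_pos rfl, one_mul]
        · rw [if_neg (fun h : i = k => hki h.symm), if_neg hki, zero_mul]
      rw [Finset.sum_congr rfl (fun k _ => hterm k), Finset.sum_ite_eq' Finset.univ i,
        if_pos (Finset.mem_univ i)]
      have hin : (i:ℕ) < n := by omega
      simp only [hL, Matrix.of_apply, Sf, Fin.ext_iff]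
      split_ifs <;> first | rfl | omega | (exfalso; omega)
  rw [nwDet, key, Matrix.det_mul]
  have hdetU : U.det = d := by
    rw [Matrix.det_of_upperTriangular (by
      intro i j hij
      have hij' : (j:ℕ) < (i:ℕ) := hij
      simp only [hU, Matrix.of_apply]
      rw [if_neg (show ¬((i:ℕ) = 0) by omega),
        if_neg (fun h : i = j => by rw [h] at hij'; exact lt_irrefl _ hij')])]
    rw [Finset.prod_eq_single (⟨0, by omega⟩ : Fin α)]
    · simp [hU]
    · intro b _ hb
      simp only [hU, Matrix.of_apply]
      rw [if_neg (fun h : (b:ℕ) = 0 => hb (Fin.ext h))]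
      simp
    · simp
  have hdetL : L.det = 1 := by
    rw [Matrix.det_of_lowerTriangular _ (by
      intro i j hij
      have hij' : (i:ℕ) < (j:ℕ) := hij
      simp only [hL, Matrix.of_apply]
      rw [if_neg (fun h : i = j => by rw [h] at hij'; exact lt_irrefl _ hij'),
        if_neg (show ¬((j:ℕ) = 0) by omega)])]
    apply Finset.prod_eq_one
    intro x _
    simp [hL]
  rw [hdetU, hdetL, mul_one]
end

section
/- Fix 1 ≤ i ≤ n-1 and let M = M_{Q^{(i)}} over ℤ[z_1,…,z_{2n-1}] for the word Q^{(i)} = (i, i-1, …, 1, 2, 3, …, n-1, 0, n, n-1, …, i+1), and let A be the northwest (n+1)×(n+1) submatrix of M. Then: (a) every n×n minor of A (the determinant of the submatrix of A obtained by deleting one row and one column) is divisible by z_{n+i-1} in ℤ[z_1,…,z_{2n-1}]; (b) the determinant of the submatrix of M with rows {2,3,…,n+1} and columns {1,2,…,n} equals ±z_{n+i-1}. (The α = 0 case in the proof of Proposition 4.) -/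
open Matrix MvPolynomial

/-! ### Auxiliary material -/

section MQAux

variable {R : Type*} [CommRing R]

theorem descWord_nil (a b : ℕ) (h : a < b) : descWord a b = [] := by
  simp [descWord, Nat.sub_eq_zero_of_le h]

theorem descWord_cons (a b : ℕ) (hb : 1 ≤ b) (h : b ≤ a) :
    descWord a b = a :: descWord (a - 1) b := by
  unfold descWord
  have h1 : a + 1 - b = (a - b) + 1 := by omega
  have h2 : a - 1 + 1 - b = a - b := by omega
  rw [h1, h2, List.range_succ, List.reverse_append]
  simp
  omega

theorem ascWord_nil_s12 (a b : ℕ) (h : b < a) : ascWord a b = [] := by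
  simp [ascWord, Nat.sub_eq_zero_of_le h]

theorem ascWord_concat (a b : ℕ) (ha : 1 ≤ a) (h : a ≤ b) :
    ascWord a b = ascWord a (b - 1) ++ [b] := by
  unfold ascWord
  have h1 : b + 1 - a = (b - a) + 1 := by omega
  have h2 : b - 1 + 1 - a = b - a := by omega
  rw [h1, h2, List.range_succ, List.map_append]
  simp
  omega

theorem mem_descWord {a b x : ℕ} (hx : x ∈ descWord a b) : b ≤ x ∧ x ≤ a := by
  simp [descWord] at hx
  obtain ⟨y, hy, rfl⟩ := hx
  omega

theorem mem_ascWord {a b x : ℕ} (hx : x ∈ ascWord a b) : a ≤ x ∧ x ≤ b := by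
  simp [ascWord] at hx
  obtain ⟨y, hy, rfl⟩ := hx
  omega

theorem descWord_length (a b : ℕ) : (descWord a b).length = a + 1 - b := by
  simp [descWord]

theorem ascWord_length (a b : ℕ) : (ascWord a b).length = b + 1 - a := by
  simp [ascWord]

/-- The northwest block of `gMat n α z` for `1 ≤ α ≤ n`. -/
def Bm (n α : ℕ) (z : R) : Matrix (Fin (n+1)) (Fin (n+1)) R :=
  Matrix.of fun p q =>
    if (p:ℕ)+1 = α ∧ (q:ℕ)+1 = α then -z
    else if ((p:ℕ)+1 = α ∧ (q:ℕ) = α) ∨ ((p:ℕ) = α ∧ (q:ℕ)+1 = α) then 1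
    else if p = q ∧ ¬((p:ℕ)+1 = α ∨ (p:ℕ) = α) then 1
    else 0

theorem Bm_mulVec_of_eq {n α : ℕ} (z : R) (p q : Fin (n+1))
    (hp : (p:ℕ)+1 = α) (hq : (q:ℕ) = α) :
    Bm n α z *ᵥ Pi.single q 1 = Pi.single p 1 := by
  funext r
  rw [Matrix.mulVec_single_one]
  simp only [Bm, Matrix.col_apply, Matrix.of_apply, Pi.single_apply, Fin.ext_iff, mul_one]
  split_ifs <;> first | omega | rfl

theorem Bm_mulVec_of_ne {n α : ℕ} (z : R) (q : Fin (n+1))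
    (h1 : (q:ℕ)+1 ≠ α) (h2 : (q:ℕ) ≠ α) :
    Bm n α z *ᵥ Pi.single q 1 = Pi.single q 1 := by
  funext r
  rw [Matrix.mulVec_single_one]
  simp only [Bm, Matrix.col_apply, Matrix.of_apply, Pi.single_apply, Fin.ext_iff, mul_one]
  split_ifs <;> first | omega | rfl

theorem single_vecMul_Bm_of_ne {n α : ℕ} (z : R) (p : Fin (n+1))
    (h1 : (p:ℕ)+1 ≠ α) (h2 : (p:ℕ) ≠ α) :
    Pi.single p 1 ᵥ* Bm n α z = Pi.single p 1 := by
  funext r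
  rw [Matrix.single_one_vecMul]
  simp only [Bm, Matrix.row_apply, Matrix.of_apply, Pi.single_apply, Fin.ext_iff, one_mul]
  split_ifs <;> first | omega | rfl

theorem pair_vecMul_Bm {n α : ℕ} (z : R) (p r : Fin (n+1))
    (hp : (p:ℕ)+1 = α) (hr : (r:ℕ) = α) :
    ((Pi.single p 1 : Fin (n+1) → R) + z • (Pi.single r 1 : Fin (n+1) → R)) ᵥ* Bm n α z
      = Pi.single r 1 := by
  funext j
  rw [Matrix.add_vecMul, Matrix.smul_vecMul, Matrix.single_one_vecMul, Matrix.single_one_vecMul]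
  simp only [Bm, Matrix.row_apply, Matrix.of_apply, Pi.add_apply, Pi.smul_apply, Pi.single_apply,
    Fin.ext_iff, one_mul, smul_eq_mul]
  split_ifs <;> first | omega | ring

theorem Bm_eq_transvection_mul_perm {n α : ℕ} (h1 : 1 ≤ α) (h2 : α ≤ n) (z : R) :
    Bm n α z =
      Matrix.transvection (⟨α-1, by omega⟩ : Fin (n+1)) ⟨α, by omega⟩ (-z) *
        ((Equiv.swap (⟨α-1, by omega⟩ : Fin (n+1)) ⟨α, by omega⟩).toPEquiv.toMatrix) := by
  rw [PEquiv.mul_toMatrix_toPEquiv]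
  funext p q
  have hs : (((Equiv.swap (⟨α-1, by omega⟩ : Fin (n+1)) ⟨α, by omega⟩).symm q :
      Fin (n+1)) : ℕ) = if (q:ℕ) = α-1 then α else if (q:ℕ) = α then α-1 else q := by
    rw [Equiv.symm_swap]
    by_cases hqa : (q:ℕ) = α - 1
    · have hq : q = ⟨α-1, by omega⟩ := Fin.ext hqa
      rw [if_pos hqa, hq, Equiv.swap_apply_left]
    · by_cases hqb : (q:ℕ) = α
      · have hq : q = ⟨α, by omega⟩ := Fin.ext hqb
        rw [if_neg hqa, if_pos hqb, hq, Equiv.swap_apply_right]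
      · rw [if_neg hqa, if_neg hqb, Equiv.swap_apply_of_ne_of_ne
          (fun h => hqa (by rw [h])) (fun h => hqb (by rw [h]))]
  simp only [Bm, Matrix.of_apply, Matrix.transvection, Matrix.submatrix_apply, id_eq,
    Matrix.add_apply, Matrix.one_apply, Matrix.single, Matrix.of_apply,
    Fin.ext_iff, hs]
  split_ifs <;> first | omega | ring

theorem det_Bm {n α : ℕ} (h1 : 1 ≤ α) (h2 : α ≤ n) (z : R) :
    (Bm n α z).det = -1 := by
  rw [Bm_eq_transvection_mul_perm h1 h2, Matrix.det_mul,
    Matrix.det_transvection_of_ne _ _ (by simp [Fin.ext_iff]; omega) (-z), one_mul]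
  have : ((Equiv.swap (⟨α-1, by omega⟩ : Fin (n+1)) ⟨α, by omega⟩).toPEquiv.toMatrix :
      Matrix (Fin (n+1)) (Fin (n+1)) R) = (Equiv.swap (⟨α-1, by omega⟩ : Fin (n+1))
        ⟨α, by omega⟩).permMatrix R := rfl
  rw [this, Matrix.det_permutation, Equiv.Perm.sign_swap (by simp [Fin.ext_iff]; omega)]
  simp

/-! ### products of `Bm` along words -/

def Bprod (n : ℕ) : List ℕ → (ℕ → R) → Matrix (Fin (n+1)) (Fin (n+1)) R
  | [], _ => 1
  | a :: t, f => Bm n a (f 0) * Bprod n t (fun j => f (j+1))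

theorem Bprod_append (n : ℕ) (u v : List ℕ) : ∀ (f : ℕ → R),
    Bprod n (u ++ v) f = Bprod n u f * Bprod n v (fun j => f (j + u.length)) := by
  induction u with
  | nil =>
    intro f
    show Bprod n v f = 1 * Bprod n v (fun j => f (j + 0))
    rw [one_mul]
    congr 1
  | cons a t ih =>
    intro f
    show Bm n a (f 0) * Bprod n (t ++ v) (fun j => f (j+1)) = _
    rw [ih, ← mul_assoc]
    rfl

theorem Bprod_asc_mulVec (n : ℕ) (b : ℕ) :
    ∀ (a : ℕ) (f : ℕ → R) (ha : 1 ≤ a) (hab : a ≤ b+1) (hb : b ≤ n),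
    Bprod n (ascWord a b) f *ᵥ Pi.single (⟨b, by omega⟩ : Fin (n+1)) 1
      = Pi.single (⟨a-1, by omega⟩ : Fin (n+1)) 1 := by
  induction b with
  | zero =>
    intro a f ha hab hb
    have ha1 : a = 1 := by omega
    subst ha1
    rw [ascWord_nil_s12 _ _ (by omega)]
    show (1 : Matrix (Fin (n+1)) (Fin (n+1)) R) *ᵥ _ = _
    rw [Matrix.one_mulVec]
  | succ b ih =>
    intro a f ha hab hb
    by_cases hle : a ≤ b+1
    · rw [ascWord_concat _ _ ha hle, Bprod_append]
      have hred : b + 1 - 1 = b := by omega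
      rw [hred, ← Matrix.mulVec_mulVec]
      have hone : ∀ g : ℕ → R, Bprod n [b+1] g = Bm n (b+1) (g 0) * 1 := fun g => rfl
      rw [hone, mul_one, Bm_mulVec_of_eq _ (⟨b, by omega⟩ : Fin (n+1)) _
        (show (b:ℕ)+1 = b+1 from rfl) (show (b+1:ℕ) = b+1 from rfl)]
      exact ih a f ha hle (by omega)
    · have ha2 : a = b+2 := by omega
      subst ha2
      rw [ascWord_nil_s12 _ _ (by omega)]
      show (1 : Matrix (Fin (n+1)) (Fin (n+1)) R) *ᵥ _ = _
      rw [Matrix.one_mulVec]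
      exact congrArg (fun t : Fin (n+1) => Pi.single t (1:R))
        (Fin.ext (show b+1 = b+2-1 by omega))

theorem Bprod_desc_mulVec (n : ℕ) (i : ℕ) :
    ∀ (f : ℕ → R) (hi : 1 ≤ i) (hin : i ≤ n),
    Bprod n (descWord i 1) f *ᵥ Pi.single (⟨1, by omega⟩ : Fin (n+1)) 1
      = Pi.single (⟨0, by omega⟩ : Fin (n+1)) 1 := by
  induction i with
  | zero => intro f h; omega
  | succ i ih =>
    intro f hi hin
    rw [descWord_cons _ _ (by omega) (by omega)]
    have hred : i + 1 - 1 = i := by omega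
    rw [hred]
    show (Bm n (i+1) (f 0) * Bprod n (descWord i 1) (fun j => f (j+1))) *ᵥ _ = _
    rw [← Matrix.mulVec_mulVec]
    by_cases hi0 : i = 0
    · subst hi0
      rw [descWord_nil _ _ (by omega)]
      show Bm n 1 (f 0) *ᵥ ((1 : Matrix (Fin (n+1)) (Fin (n+1)) R) *ᵥ _) = _
      rw [Matrix.one_mulVec]
      exact Bm_mulVec_of_eq _ _ _ (show (0:ℕ)+1 = 1 from rfl) (show (1:ℕ) = 1 from rfl)
    · rw [ih _ (by omega) (by omega)]
      refine Bm_mulVec_of_ne _ _ ?_ ?_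
      · show (0:ℕ)+1 ≠ i+1
        omega
      · show (0:ℕ) ≠ i+1
        omega

theorem single_last_vecMul_Bprod (n : ℕ) (w : List ℕ) (hn : 1 ≤ n) :
    ∀ (f : ℕ → R) (hw : ∀ x ∈ w, 1 ≤ x ∧ x ≤ n-1),
    Pi.single (⟨n, by omega⟩ : Fin (n+1)) 1 ᵥ* Bprod n w f
      = Pi.single (⟨n, by omega⟩ : Fin (n+1)) 1 := by
  induction w with
  | nil =>
    intro f _
    show _ ᵥ* (1 : Matrix (Fin (n+1)) (Fin (n+1)) R) = _
    rw [Matrix.vecMul_one]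
  | cons a t ih =>
    intro f hw
    show _ ᵥ* (Bm n a (f 0) * Bprod n t (fun j => f (j+1))) = _
    rw [← Matrix.vecMul_vecMul]
    have ha := hw a (by simp)
    rw [single_vecMul_Bm_of_ne _ _ (show (n:ℕ)+1 ≠ a by omega) (show (n:ℕ) ≠ a by omega)]
    exact ih (fun j => f (j+1)) (fun x hx => hw x (by simp [hx]))

theorem det_Bprod (n : ℕ) (w : List ℕ) :
    ∀ (f : ℕ → R) (hw : ∀ x ∈ w, 1 ≤ x ∧ x ≤ n),
    (Bprod n w f).det = 1 ∨ (Bprod n w f).det = -1 := by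
  induction w with
  | nil =>
    intro f _
    left
    show (1 : Matrix (Fin (n+1)) (Fin (n+1)) R).det = 1
    exact Matrix.det_one
  | cons a t ih =>
    intro f hw
    have ha := hw a (by simp)
    have hsplit : Bprod n (a :: t) f = Bm n a (f 0) * Bprod n t (fun j => f (j+1)) := rfl
    rw [hsplit]
    rcases ih (fun j => f (j+1)) (fun x hx => hw x (by simp [hx])) with h | h <;>
      rw [Matrix.det_mul, det_Bm ha.1 ha.2, h] <;> norm_num

/-! ### block structure -/

def NEz (n : ℕ) (M : Matrix (Fin (2*n+2)) (Fin (2*n+2)) R) : Prop :=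
  ∀ i j : Fin (2*n+2), (i:ℕ) < n+1 → n+1 ≤ (j:ℕ) → M i j = 0

def SWz (n : ℕ) (M : Matrix (Fin (2*n+2)) (Fin (2*n+2)) R) : Prop :=
  ∀ i j : Fin (2*n+2), n+1 ≤ (i:ℕ) → (j:ℕ) < n+1 → M i j = 0

theorem NEz_one (n : ℕ) : NEz n (1 : Matrix (Fin (2*n+2)) (Fin (2*n+2)) R) := by
  intro i j hi hj
  rw [Matrix.one_apply_ne]
  intro h; rw [h] at hi; omega

theorem SWz_one (n : ℕ) : SWz n (1 : Matrix (Fin (2*n+2)) (Fin (2*n+2)) R) := by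
  intro i j hi hj
  rw [Matrix.one_apply_ne]
  intro h; rw [h] at hi; omega

theorem NEz_mul {n : ℕ} {M N : Matrix (Fin (2*n+2)) (Fin (2*n+2)) R}
    (hM : NEz n M) (hN : NEz n N) : NEz n (M * N) := by
  intro i j hi hj
  rw [Matrix.mul_apply]
  apply Finset.sum_eq_zero
  intro k _
  by_cases hk : (k:ℕ) < n+1
  · rw [hN k j hk hj, mul_zero]
  · rw [hM i k hi (by omega), zero_mul]

theorem SWz_mul {n : ℕ} {M N : Matrix (Fin (2*n+2)) (Fin (2*n+2)) R}
    (hM : SWz n M) (hN : SWz n N) : SWz n (M * N) := by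
  intro i j hi hj
  rw [Matrix.mul_apply]
  apply Finset.sum_eq_zero
  intro k _
  by_cases hk : (k:ℕ) < n+1
  · rw [hM i k hi hk, zero_mul]
  · rw [hN k j (by omega) hj, mul_zero]

/-- the NW `(n+1) × (n+1)` submatrix -/
def nwOf (n : ℕ) (M : Matrix (Fin (2*n+2)) (Fin (2*n+2)) R) :
    Matrix (Fin (n+1)) (Fin (n+1)) R :=
  M.submatrix (Fin.castLE (by omega)) (Fin.castLE (by omega))

theorem nwOf_one (n : ℕ) : nwOf n (1 : Matrix (Fin (2*n+2)) (Fin (2*n+2)) R) = 1 := by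
  funext p q
  simp [nwOf, Matrix.one_apply, Fin.ext_iff]

theorem nwOf_mul_left {n : ℕ} (M N : Matrix (Fin (2*n+2)) (Fin (2*n+2)) R)
    (hM : NEz n M) : nwOf n (M * N) = nwOf n M * nwOf n N := by
  funext p q
  simp only [nwOf, Matrix.submatrix_apply, Matrix.mul_apply]
  rw [← Finset.sum_filter_add_sum_filter_not Finset.univ (fun k : Fin (2*n+2) => (k:ℕ) < n+1)]
  have h2 : ∑ k ∈ Finset.univ.filter (fun k : Fin (2*n+2) => ¬ (k:ℕ) < n+1),
      M (Fin.castLE (by omega) p) k * N k (Fin.castLE (by omega) q) = 0 := by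
    apply Finset.sum_eq_zero
    intro k hk
    simp only [Finset.mem_filter] at hk
    rw [hM _ k (by simp; omega) (by omega), zero_mul]
  rw [h2, add_zero]
  have hset : Finset.univ.filter (fun k : Fin (2*n+2) => (k:ℕ) < n+1)
      = Finset.univ.map ⟨Fin.castLE (by omega : n+1 ≤ 2*n+2),
          Fin.castLE_injective _⟩ := by
    ext k
    simp only [Finset.mem_filter, Finset.mem_univ, true_and, Finset.mem_map,
      Function.Embedding.coeFn_mk]
    constructor
    · intro hk
      exact ⟨⟨(k:ℕ), hk⟩, Fin.ext rfl⟩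
    · rintro ⟨a, rfl⟩
      simpa using a.isLt
  rw [hset, Finset.sum_map]
  rfl

theorem nwOf_mul_right {n : ℕ} (M N : Matrix (Fin (2*n+2)) (Fin (2*n+2)) R)
    (hN : SWz n N) : nwOf n (M * N) = nwOf n M * nwOf n N := by
  funext p q
  simp only [nwOf, Matrix.submatrix_apply, Matrix.mul_apply]
  rw [← Finset.sum_filter_add_sum_filter_not Finset.univ (fun k : Fin (2*n+2) => (k:ℕ) < n+1)]
  have h2 : ∑ k ∈ Finset.univ.filter (fun k : Fin (2*n+2) => ¬ (k:ℕ) < n+1),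
      M (Fin.castLE (by omega) p) k * N k (Fin.castLE (by omega) q) = 0 := by
    apply Finset.sum_eq_zero
    intro k hk
    simp only [Finset.mem_filter] at hk
    rw [hN k _ (by omega) (by simp; omega), mul_zero]
  rw [h2, add_zero]
  have hset : Finset.univ.filter (fun k : Fin (2*n+2) => (k:ℕ) < n+1)
      = Finset.univ.map ⟨Fin.castLE (by omega : n+1 ≤ 2*n+2),
          Fin.castLE_injective _⟩ := by
    ext k
    simp only [Finset.mem_filter, Finset.mem_univ, true_and, Finset.mem_map,
      Function.Embedding.coeFn_mk]
    constructor
    · intro hk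
      exact ⟨⟨(k:ℕ), hk⟩, Fin.ext rfl⟩
    · rintro ⟨a, rfl⟩
      simpa using a.isLt
  rw [hset, Finset.sum_map]
  rfl

theorem gMat_NEz {n α : ℕ} (h1 : 1 ≤ α) (h2 : α ≤ n) (z : R) : NEz n (gMat n α z) := by
  intro i j hi hj
  simp only [gMat, Matrix.of_apply]
  split_ifs <;> first | omega | rfl

theorem gMat_SWz {n α : ℕ} (h1 : 1 ≤ α) (h2 : α ≤ n) (z : R) : SWz n (gMat n α z) := by
  intro i j hi hj
  simp only [gMat, Matrix.of_apply]
  split_ifs <;> first | omega | rfl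

theorem nw_gMat {n α : ℕ} (h1 : 1 ≤ α) (h2 : α ≤ n) (z : R) :
    nwOf n (gMat n α z) = Bm n α z := by
  funext p q
  simp only [nwOf, Matrix.submatrix_apply, gMat, Bm, Matrix.of_apply, Fin.coe_castLE,
    Fin.ext_iff]
  split_ifs <;> first | omega | rfl

/-- the vector of diagonal entries of the NW block of `gMat n 0 z` -/
def dvec (n : ℕ) (z : R) : Fin (n+1) → R :=
  fun k => if (k:ℕ)+1 = n then -z else if (k:ℕ) = n then z else 1

theorem nw_gMat0 {n : ℕ} (z : R) :
    nwOf n (gMat n 0 z) = Matrix.diagonal (dvec n z) := by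
  funext p q
  simp only [nwOf, Matrix.submatrix_apply, gMat, Matrix.of_apply, Fin.coe_castLE,
    Matrix.diagonal_apply, dvec, Fin.ext_iff]
  split_ifs <;> first | omega | rfl

/-! ### products of `gMat` along words -/

def Gprod (n : ℕ) : List ℕ → (ℕ → R) → Matrix (Fin (2*n+2)) (Fin (2*n+2)) R
  | [], _ => 1
  | a :: t, f => gMat n a (f 0) * Gprod n t (fun j => f (j+1))

theorem Gprod_append (n : ℕ) (u v : List ℕ) : ∀ (f : ℕ → R),
    Gprod n (u ++ v) f = Gprod n u f * Gprod n v (fun j => f (j + u.length)) := by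
  induction u with
  | nil =>
    intro f
    show Gprod n v f = 1 * Gprod n v (fun j => f (j + 0))
    rw [one_mul]
    congr 1
  | cons a t ih =>
    intro f
    show gMat n a (f 0) * Gprod n (t ++ v) (fun j => f (j+1)) = _
    rw [ih, ← mul_assoc]
    rfl

theorem MQ_eq_Gprod (n : ℕ) (Q : List ℕ) :
    MQ n Q = Gprod n Q (fun j => X (j+1)) := by
  suffices h : ∀ (f : ℕ → MvPolynomial ℕ ℤ),
      (List.ofFn (fun l : Fin Q.length => gMat n (Q.get l) (f (l:ℕ)))).prod = Gprod n Q f by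
    exact h (fun j => X (j+1))
  induction Q with
  | nil => intro f; rfl
  | cons a t ih =>
    intro f
    rw [List.ofFn_succ, List.prod_cons]
    show gMat n a (f 0) * _ = gMat n a (f 0) * Gprod n t (fun j => f (j+1))
    congr 1
    exact ih (fun j => f (j+1))

theorem NEz_Gprod (n : ℕ) (w : List ℕ) :
    ∀ (f : ℕ → R) (hw : ∀ x ∈ w, 1 ≤ x ∧ x ≤ n), NEz n (Gprod n w f) := by
  induction w with
  | nil => intro f _; exact NEz_one n
  | cons a t ih =>
    intro f hw
    have ha := hw a (by simp)
    exact NEz_mul (gMat_NEz ha.1 ha.2 _) (ih _ (fun x hx => hw x (by simp [hx])))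

theorem SWz_Gprod (n : ℕ) (w : List ℕ) :
    ∀ (f : ℕ → R) (hw : ∀ x ∈ w, 1 ≤ x ∧ x ≤ n), SWz n (Gprod n w f) := by
  induction w with
  | nil => intro f _; exact SWz_one n
  | cons a t ih =>
    intro f hw
    have ha := hw a (by simp)
    exact SWz_mul (gMat_SWz ha.1 ha.2 _) (ih _ (fun x hx => hw x (by simp [hx])))

theorem nw_Gprod (n : ℕ) (w : List ℕ) :
    ∀ (f : ℕ → R) (hw : ∀ x ∈ w, 1 ≤ x ∧ x ≤ n),
    nwOf n (Gprod n w f) = Bprod n w f := by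
  induction w with
  | nil => intro f _; exact nwOf_one n
  | cons a t ih =>
    intro f hw
    have ha := hw a (by simp)
    show nwOf n (gMat n a (f 0) * Gprod n t (fun j => f (j+1))) = _
    rw [nwOf_mul_left _ _ (gMat_NEz ha.1 ha.2 _), nw_gMat ha.1 ha.2,
      ih _ (fun x hx => hw x (by simp [hx]))]
    rfl

theorem vecMul_smul_one {m : Type*} [Fintype m] [DecidableEq m] (c : R) (v : m → R) :
    v ᵥ* (c • (1 : Matrix m m R)) = c • v := by
  funext j
  simp only [Matrix.vecMul, dotProduct, Matrix.smul_apply, Matrix.one_apply,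
    smul_eq_mul, mul_ite, mul_one, mul_zero, Pi.smul_apply]
  rw [Finset.sum_eq_single j (fun b _ hb => by rw [if_neg hb])
    (fun h => absurd (Finset.mem_univ j) h), if_pos rfl]
  ring

theorem single_eq_smul_single {m : Type*} [DecidableEq m] (x : m) (c : R) :
    (Pi.single x c : m → R) = c • (Pi.single x 1 : m → R) := by
  funext t
  simp only [Pi.single_apply, Pi.smul_apply, smul_eq_mul, mul_ite, mul_one, mul_zero]

end MQAux

set_option maxHeartbeats 1600000 in
/-- the `α = 0` case in the proof of Proposition 4: for
`M = M_{Q^{(i)}}` with `1 ≤ i ≤ n-1` and `A` the northwest `(n+1) × (n+1)` submatrix of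
`M`: (a) every `n × n` minor of `A` is divisible by `z_{n+i-1}`; (b) the determinant of
the submatrix of `M` with rows `{2,…,n+1}` and columns `{1,…,n}` equals `±z_{n+i-1}`. -/
theorem MQ_wordQi_minors (n : ℕ) (hn : 2 ≤ n) (i : ℕ) (hi1 : 1 ≤ i) (hin : i ≤ n - 1) :
    let A : Matrix (Fin (n + 1)) (Fin (n + 1)) (MvPolynomial ℕ ℤ) :=
      (MQ n (wordQi n i)).submatrix (Fin.castLE (by omega)) (Fin.castLE (by omega))
    let d : MvPolynomial ℕ ℤ :=
      ((MQ n (wordQi n i)).submatrix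
        (fun a : Fin n => (⟨(a : ℕ) + 1, by omega⟩ : Fin (2 * n + 2)))
        (fun b : Fin n => (Fin.castLE (by omega) b : Fin (2 * n + 2)))).det
    (∀ r c : Fin (n + 1), X (n + i - 1) ∣ (A.submatrix r.succAbove c.succAbove).det) ∧
    (d = X (n + i - 1) ∨ d = -X (n + i - 1)) := by
  intro A d
  have hn1 : 1 ≤ n := by omega
  set z : MvPolynomial ℕ ℤ := X (n + i - 1) with hz
  set w1 : List ℕ := descWord i 1 ++ ascWord 2 (n-1) with hw1
  set w2 : List ℕ := descWord n (i+1) with hw2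
  set f1 : ℕ → MvPolynomial ℕ ℤ := fun j => X (j+1) with hf1
  set f2 : ℕ → MvPolynomial ℕ ℤ := fun j => X (j + n + i) with hf2
  have hw1mem : ∀ x ∈ w1, 1 ≤ x ∧ x ≤ n := by
    intro x hx
    rcases List.mem_append.mp hx with h | h
    · have := mem_descWord h; omega
    · have := mem_ascWord h; omega
  have hw2mem : ∀ x ∈ w2, 1 ≤ x ∧ x ≤ n := by
    intro x hx; have := mem_descWord hx; omega
  have hw1len : w1.length = n + i - 2 := by
    rw [hw1, List.length_append, descWord_length, ascWord_length]; omega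
  -- decomposition of MQ
  have e1 : MQ n (wordQi n i)
      = Gprod n (w1 ++ [0]) f1 * Gprod n w2 (fun j => f1 (j + (w1 ++ [0]).length)) := by
    rw [MQ_eq_Gprod]
    exact Gprod_append n (w1 ++ [0]) w2 f1
  have e2 : Gprod n (w1 ++ [0]) f1
      = Gprod n w1 f1 * (gMat n 0 (f1 (0 + w1.length)) * 1) :=
    Gprod_append n w1 [0] f1
  have e3 : f1 (0 + w1.length) = z := by
    rw [hf1, hz, hw1len]
    exact congrArg X (by omega)
  have hlen01 : (w1 ++ [0]).length = n + i - 1 := by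
    rw [List.length_append, hw1len]
    show n + i - 2 + 1 = n + i - 1
    omega
  have e4 : (fun j => f1 (j + (w1 ++ [0]).length)) = f2 := by
    funext j
    rw [hf1, hf2, hlen01]
    exact congrArg X (by omega)
  have hMQ : MQ n (wordQi n i) = Gprod n w1 f1 * gMat n 0 z * Gprod n w2 f2 := by
    rw [e1, e2, e3, e4, mul_one]
  set P1 := Bprod n w1 f1 with hP1
  set S1 := Bprod n w2 f2 with hS1
  set Dm := Matrix.diagonal (dvec n z) with hDm
  have hAeq : A = P1 * Dm * S1 := by
    show nwOf n (MQ n (wordQi n i)) = _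
    rw [hMQ, nwOf_mul_right _ _ (SWz_Gprod n w2 f2 hw2mem),
      nwOf_mul_left _ _ (NEz_Gprod n w1 f1 hw1mem), nw_Gprod n w1 f1 hw1mem,
      nw_Gprod n w2 f2 hw2mem, nw_gMat0]
  -- divisibility of adjugate entries
  have hDdvd : ∀ k l : Fin (n+1), z ∣ (Matrix.adjugate Dm) k l := by
    intro k l
    rw [hDm, Matrix.adjugate_diagonal]
    by_cases hkl : k = l
    · subst hkl
      rw [Matrix.diagonal_apply_eq]
      by_cases hk : k = (⟨n-1, by omega⟩ : Fin (n+1))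
      · have hv : dvec n z (⟨n, by omega⟩ : Fin (n+1)) = z := by
          simp [dvec]
        rw [hk]
        refine dvd_trans (dvd_of_eq hv.symm) (Finset.dvd_prod_of_mem _ ?_)
        refine Finset.mem_erase.mpr ⟨?_, Finset.mem_univ _⟩
        simp only [ne_eq, Fin.ext_iff]
        omega
      · have hv : dvec n z (⟨n-1, by omega⟩ : Fin (n+1)) = -z := by
          have hn' : n - 1 + 1 = n := by omega
          simp [dvec, hn']
        refine dvd_trans ?_ (Finset.dvd_prod_of_mem _
          (Finset.mem_erase.mpr ⟨fun hh => hk hh.symm, Finset.mem_univ _⟩))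
        rw [hv]
        exact dvd_neg.mpr dvd_rfl
    · rw [Matrix.diagonal_apply_ne _ hkl]
      exact dvd_zero z
  have hAdj : Matrix.adjugate A
      = Matrix.adjugate S1 * (Matrix.adjugate Dm * Matrix.adjugate P1) := by
    rw [hAeq, Matrix.adjugate_mul_distrib, Matrix.adjugate_mul_distrib]
  have hadvd : ∀ c r : Fin (n+1), z ∣ Matrix.adjugate A c r := by
    intro c r
    rw [hAdj, Matrix.mul_apply]
    refine Finset.dvd_sum (fun k _ => ?_)
    refine Dvd.dvd.mul_left ?_ _
    rw [Matrix.mul_apply]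
    exact Finset.dvd_sum (fun l _ => (hDdvd k l).mul_right _)
  constructor
  · -- part (a)
    intro r c
    have h := hadvd c r
    rw [Matrix.adjugate_fin_succ_eq_det_submatrix] at h
    rcases neg_one_pow_eq_or (MvPolynomial ℕ ℤ) ((r:ℕ) + (c:ℕ)) with hpow | hpow
    · rwa [hpow, one_mul] at h
    · rw [hpow, neg_one_mul] at h
      exact dvd_neg.mp h
  · -- part (b)
    have hd : d = (A.submatrix ((0 : Fin (n+1)).succAbove)
        ((Fin.last n).succAbove)).det := by
      show ((MQ n (wordQi n i)).submatrix _ _).det = _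
      congr 1
      funext a b
      show MQ n (wordQi n i) ⟨(a:ℕ)+1, by omega⟩ (Fin.castLE (by omega) b)
          = MQ n (wordQi n i) (Fin.castLE (by omega) ((0 : Fin (n+1)).succAbove a))
            (Fin.castLE (by omega) ((Fin.last n).succAbove b))
      have h1 : (⟨(a:ℕ)+1, by omega⟩ : Fin (2*n+2))
          = Fin.castLE (by omega) ((0 : Fin (n+1)).succAbove a) := by
        apply Fin.ext
        simp [Fin.succAbove, Fin.lt_def]
      have h2 : (Fin.castLE (by omega) b : Fin (2*n+2))
          = Fin.castLE (by omega) ((Fin.last n).succAbove b) := by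
        apply Fin.ext
        simp [Fin.succAbove_last]
      rw [h1, h2]
    -- vector facts
    have hP : P1 *ᵥ Pi.single (⟨n-1, by omega⟩ : Fin (n+1)) 1
        = Pi.single (⟨0, by omega⟩ : Fin (n+1)) 1 := by
      rw [hP1, hw1, Bprod_append, ← Matrix.mulVec_mulVec,
        Bprod_asc_mulVec n (n-1) 2 _ (by omega) (by omega) (by omega)]
      exact Bprod_desc_mulVec n i f1 hi1 (by omega)
    have hu : ((Pi.single (⟨n-1, by omega⟩ : Fin (n+1)) 1 : Fin (n+1) → MvPolynomial ℕ ℤ)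
        + (f2 0) • (Pi.single (⟨n, by omega⟩ : Fin (n+1)) 1 : Fin (n+1) → MvPolynomial ℕ ℤ))
          ᵥ* S1 = Pi.single (⟨n, by omega⟩ : Fin (n+1)) 1 := by
      have hcons : w2 = n :: descWord (n-1) (i+1) := by
        rw [hw2]; exact descWord_cons n (i+1) (by omega) (by omega)
      rw [hS1, hcons]
      show _ ᵥ* (Bm n n (f2 0) * Bprod n (descWord (n-1) (i+1)) (fun j => f2 (j+1))) = _
      rw [← Matrix.vecMul_vecMul,
        pair_vecMul_Bm (f2 0) _ _ (show (n-1:ℕ)+1 = n by omega) (show (n:ℕ) = n from rfl)]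
      exact single_last_vecMul_Bprod n _ (by omega) _
        (fun x hx => by have := mem_descWord hx; omega)
    -- adjugate column/row facts
    have ea : Matrix.adjugate P1 *ᵥ Pi.single (⟨0, by omega⟩ : Fin (n+1)) 1
        = P1.det • (Pi.single (⟨n-1, by omega⟩ : Fin (n+1)) 1
          : Fin (n+1) → MvPolynomial ℕ ℤ) := by
      rw [← hP, Matrix.mulVec_mulVec, Matrix.adjugate_mul, Matrix.smul_mulVec,
        Matrix.one_mulVec]
    have hprod : ∏ j ∈ Finset.univ.erase (⟨n-1, by omega⟩ : Fin (n+1)), dvec n z j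
        = z := by
      rw [Finset.prod_eq_single_of_mem (⟨n, by omega⟩ : Fin (n+1))
        (Finset.mem_erase.mpr ⟨by simp only [ne_eq, Fin.ext_iff]; omega,
          Finset.mem_univ _⟩)]
      · simp [dvec]
      · intro b hb hbn
        have hb1 := (Finset.mem_erase.mp hb).1
        simp only [ne_eq, Fin.ext_iff] at hb1 hbn
        simp only [dvec]
        split_ifs <;> first | omega | rfl
    have eb : Matrix.adjugate Dm *ᵥ Pi.single (⟨n-1, by omega⟩ : Fin (n+1)) 1
        = z • (Pi.single (⟨n-1, by omega⟩ : Fin (n+1)) 1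
          : Fin (n+1) → MvPolynomial ℕ ℤ) := by
      rw [hDm, Matrix.adjugate_diagonal, Matrix.diagonal_mulVec_single, hprod, mul_one]
      exact single_eq_smul_single _ _
    have ec : Pi.single (⟨n, by omega⟩ : Fin (n+1)) 1 ᵥ* Matrix.adjugate S1
        = S1.det • ((Pi.single (⟨n-1, by omega⟩ : Fin (n+1)) 1 : Fin (n+1) → MvPolynomial ℕ ℤ)
          + (f2 0) • (Pi.single (⟨n, by omega⟩ : Fin (n+1)) 1 : Fin (n+1) → MvPolynomial ℕ ℤ)) := by
      conv_lhs => rw [← hu]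
      rw [Matrix.vecMul_vecMul, Matrix.mul_adjugate, vecMul_smul_one]
    have hS : Matrix.adjugate S1 (⟨n, by omega⟩ : Fin (n+1)) (⟨n-1, by omega⟩ : Fin (n+1))
        = S1.det := by
      have h := congrFun ec (⟨n-1, by omega⟩ : Fin (n+1))
      rw [Matrix.single_one_vecMul] at h
      simp only [Matrix.row_apply, one_mul, Pi.smul_apply, Pi.add_apply, smul_eq_mul] at h
      have hne : (⟨n-1, by omega⟩ : Fin (n+1)) ≠ (⟨n, by omega⟩ : Fin (n+1)) := by
        simp only [ne_eq, Fin.ext_iff]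
        omega
      rw [Pi.single_eq_of_ne hne] at h
      rw [h, Pi.single_eq_same]
      ring
    have hcol : Matrix.adjugate A *ᵥ Pi.single (⟨0, by omega⟩ : Fin (n+1)) 1
        = P1.det • (z • (Matrix.adjugate S1 *ᵥ Pi.single (⟨n-1, by omega⟩ : Fin (n+1)) 1)) := by
      rw [hAdj, ← Matrix.mulVec_mulVec, ← Matrix.mulVec_mulVec, ea,
        Matrix.mulVec_smul, eb, Matrix.mulVec_smul, Matrix.mulVec_smul]
    have hentry : Matrix.adjugate A (Fin.last n) (0 : Fin (n+1))
        = P1.det * (z * S1.det) := by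
      have h0 : (0 : Fin (n+1)) = ⟨0, by omega⟩ := Fin.ext (by simp)
      have hlastv : Fin.last n = (⟨n, by omega⟩ : Fin (n+1)) := Fin.ext (by simp)
      have hev : Matrix.adjugate A (Fin.last n) (0 : Fin (n+1))
          = (Matrix.adjugate A *ᵥ Pi.single (⟨0, by omega⟩ : Fin (n+1)) 1) (Fin.last n) := by
        rw [Matrix.mulVec_single, h0]
        exact (mul_one _).symm
      rw [hev, hcol]
      simp only [Pi.smul_apply, smul_eq_mul, Matrix.mulVec_single_one, Matrix.col_apply, mul_one]
      rw [hlastv, hS]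
    -- assemble
    have hsub := Matrix.adjugate_fin_succ_eq_det_submatrix A (Fin.last n) (0 : Fin (n+1))
    have hexp : (((0 : Fin (n+1)) : ℕ) + ((Fin.last n) : ℕ)) = n := by simp
    rw [hexp, hentry, ← hd] at hsub
    -- hsub : P1.det * (z * S1.det) = (-1)^n * d
    have hsq : ((-1 : MvPolynomial ℕ ℤ)^n) * ((-1 : MvPolynomial ℕ ℤ)^n) = 1 := by
      rw [← pow_add]
      exact Even.neg_one_pow ⟨n, rfl⟩
    have hfinal : d = (-1 : MvPolynomial ℕ ℤ)^n * (P1.det * (z * S1.det)) := by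
      rw [hsub, ← mul_assoc, hsq, one_mul]
    have hdp := det_Bprod n w1 f1 hw1mem
    have hds := det_Bprod n w2 f2 hw2mem
    rw [← hP1] at hdp
    rw [← hS1] at hds
    rcases hdp with h1 | h1 <;> rcases hds with h2 | h2 <;>
      rcases neg_one_pow_eq_or (MvPolynomial ℕ ℤ) n with h3 | h3 <;>
      rw [h1, h2, h3] at hfinal <;>
      rw [hfinal] <;>
      first
        | (left; ring1)
        | (right; ring1)
end
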